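/- Let p be a prime, let s ≥ 1 be an integer, let a, d ∈ ℤ_p^× be p-adic units, let b, c ∈ ℤ_p, and let n, x, y be nonnegative integers with y ≤ n. Let A be the coefficient of X^x in the polynomial (p^s·c·X + d)^{n−y} (p·a·X + b)^{y} ∈ ℤ_p[X]. If x > n then A = 0; otherwise the p-adic valuation of A is at least x + (s−1)·max(0, x − y). -/

import Mathlib

open Polynomial

lemma coeff_linear_pow_aux {p : ℕ} [Fact p.Prime] (u v : ℤ_[p]) (k i : ℕ) :
    ((C u * X + C v) ^ k).coeff i =
      if i ≤ k then u ^ i * v ^ (k - i) * (k.choose i : ℤ_[p]) else 0 := by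
  rw [add_pow]
  rw [finset_sum_coeff]
  have : ∀ m ∈ Finset.range (k + 1),
      ((C u * X) ^ m * (C v) ^ (k - m) * (k.choose m : ℤ_[p][X])).coeff i =
      if m = i then u ^ i * v ^ (k - i) * (k.choose i : ℤ_[p]) else 0 := by
    intro m _
    have hrw : (C u * X) ^ m * (C v) ^ (k - m) * (k.choose m : ℤ_[p][X]) =
        C (u ^ m * v ^ (k - m) * (k.choose m : ℤ_[p])) * X ^ m := by
      rw [mul_pow, ← C_pow, ← C_pow, ← C_eq_natCast, C_mul, C_mul]
      ring
    rw [hrw, coeff_C_mul, coeff_X_pow]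
    by_cases h1 : i = m
    · subst h1; simp
    · rw [if_neg h1, if_neg (fun h => h1 h.symm), mul_zero]
  rw [Finset.sum_congr rfl this, Finset.sum_ite_eq' (Finset.range (k + 1))]
  simp [Nat.lt_succ_iff]

lemma norm_coeff_linear_pow {p : ℕ} [Fact p.Prime] (u v : ℤ_[p]) (k i : ℕ) :
    ‖((C u * X + C v) ^ k).coeff i‖ ≤ ‖u‖ ^ i := by
  rw [coeff_linear_pow_aux]
  split_ifs with h
  · calc ‖u ^ i * v ^ (k - i) * (k.choose i : ℤ_[p])‖
        = ‖u‖ ^ i * ‖v ^ (k - i)‖ * ‖(k.choose i : ℤ_[p])‖ := by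
          rw [norm_mul, norm_mul, norm_pow]
      _ ≤ ‖u‖ ^ i * 1 * 1 := by
          gcongr
          · exact PadicInt.norm_le_one _
          · exact PadicInt.norm_le_one _
      _ = ‖u‖ ^ i := by ring
  · simp [pow_nonneg (norm_nonneg u)]

theorem stmt5 (p : ℕ) [Fact p.Prime] (s : ℕ) (hs : 1 ≤ s)
    (a b c d : ℤ_[p]) (ha : IsUnit a) (hd : IsUnit d)
    (n x y : ℕ) (hyn : y ≤ n) (A : ℤ_[p])
    (hA : A = (((C ((p : ℤ_[p]) ^ s * c) * X + C d) ^ (n - y) *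
      (C ((p : ℤ_[p]) * a) * X + C b) ^ y).coeff x)) :
    (n < x → A = 0) ∧
    (x ≤ n → ‖A‖ ≤ (p : ℝ) ^ (-((x + (s - 1) * (x - y) : ℕ) : ℤ))) := by
  have hp1 : (1 : ℝ) < p := by exact_mod_cast (Fact.out : p.Prime).one_lt
  have hp0 : (0 : ℝ) < p := lt_trans one_pos hp1
  rw [hA, coeff_mul]
  constructor
  · intro hnx
    apply Finset.sum_eq_zero
    rintro ⟨i, j⟩ hij
    rw [Finset.HasAntidiagonal.mem_antidiagonal] at hij
    rcases le_or_gt i (n - y) with hi | hi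
    · have hj : y < j := by omega
      rw [coeff_linear_pow_aux _ _ y j, if_neg (by omega), mul_zero]
    · rw [coeff_linear_pow_aux _ _ (n - y) i, if_neg (by omega), zero_mul]
  · intro hxn
    apply IsUltrametricDist.norm_sum_le_of_forall_le_of_nonneg
    · positivity
    rintro ⟨i, j⟩ hij
    rw [Finset.HasAntidiagonal.mem_antidiagonal] at hij
    rcases le_or_gt j y with hj | hj
    · -- main case
      have h1 : ‖((p : ℤ_[p]) ^ s * c)‖ ≤ (p : ℝ) ^ (-(s : ℤ)) := by
        calc ‖((p : ℤ_[p]) ^ s * c)‖ ≤ ‖((p : ℤ_[p]) ^ s)‖ * 1 := by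
              rw [norm_mul]; gcongr; exact PadicInt.norm_le_one _
          _ = (p : ℝ) ^ (-(s : ℤ)) := by
              rw [mul_one, norm_pow, PadicInt.norm_p, inv_pow,
                ← zpow_natCast, ← zpow_neg]
      have h2 : ‖((p : ℤ_[p]) * a)‖ ≤ (p : ℝ) ^ (-(1 : ℤ)) := by
        calc ‖((p : ℤ_[p]) * a)‖ ≤ ‖(p : ℤ_[p])‖ * 1 := by
              rw [norm_mul]; gcongr; exact PadicInt.norm_le_one _
          _ = (p : ℝ) ^ (-(1 : ℤ)) := by
              rw [mul_one, PadicInt.norm_p, zpow_neg, zpow_one]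
      calc ‖((C ((p : ℤ_[p]) ^ s * c) * X + C d) ^ (n - y)).coeff i *
            ((C ((p : ℤ_[p]) * a) * X + C b) ^ y).coeff j‖
          ≤ ‖((p : ℤ_[p]) ^ s * c)‖ ^ i * ‖((p : ℤ_[p]) * a)‖ ^ j := by
            rw [norm_mul]
            exact mul_le_mul (norm_coeff_linear_pow _ _ _ _)
              (norm_coeff_linear_pow _ _ _ _) (norm_nonneg _)
              (pow_nonneg (norm_nonneg _) _)
        _ ≤ ((p : ℝ) ^ (-(s : ℤ))) ^ i * ((p : ℝ) ^ (-(1 : ℤ))) ^ j := by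
            gcongr <;> first | exact norm_nonneg _ | exact h1 | exact h2
        _ = (p : ℝ) ^ (-((s * i + j : ℕ) : ℤ)) := by
            rw [← zpow_natCast _ i, ← zpow_natCast _ j, ← zpow_mul, ← zpow_mul,
              ← zpow_add₀ (ne_of_gt hp0)]
            congr 1
            push_cast
            ring
        _ ≤ (p : ℝ) ^ (-((x + (s - 1) * (x - y) : ℕ) : ℤ)) := by
            apply zpow_le_zpow_right₀ (le_of_lt hp1)
            have key : x + (s - 1) * (x - y) ≤ s * i + j := by
              rcases le_or_gt x y with h | h
              · have hxy : x - y = 0 := by omega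
                rw [hxy]
                nlinarith [Nat.one_le_iff_ne_zero.mp hs]
              · have hi : x - y ≤ i := by omega
                have hss : s * i + j = (i + j) + (s - 1) * i := by
                  cases s with
                  | zero => omega
                  | succ t => simp [Nat.succ_sub_one]; ring
                rw [hss, hij]
                exact Nat.add_le_add_left (Nat.mul_le_mul_left _ hi) x
            omega
    · rw [coeff_linear_pow_aux _ _ y j, if_neg (by omega), mul_zero, norm_zero]
      positivity
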